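/- arXiv:1012.2778 — 2 statements merged into one kernel-verified Lean document; each statement's English description precedes it below -/
import Mathlib

section
/- Let n ≥ 3, let κ, κ_4, …, κ_n be real numbers, and let S be the linear endomorphism of an n-dimensional real vector space defined on a basis (E_1, …, E_n) by S E_1 = κ E_1 − E_3, S E_2 = κ E_2, S E_3 = E_2 + κ E_3, and S E_i = κ_i E_i for i ≥ 4. Set κ_1 = κ_2 = κ_3 = κ. Then for every k = 0, …, n the Newton transformation satisfies: P_k E_1 = (−1)^k (μ_k^{\{1\}} E_1 − μ_{k−2}^{\{1,2,3\}} E_2 + μ_{k−1}^{\{1,2\}} E_3), P_k E_2 = (−1)^k μ_k^{\{1\}} E_2, P_k E_3 = (−1)^k (−μ_{k−1}^{\{1,2\}} E_2 + μ_k^{\{1\}} E_3), and P_k E_i = (−1)^k μ_k^{\{i\}} E_i for every i ≥ 4. -/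
/-- `mu κ J k` is the `k`-th elementary symmetric function of the values `κ i`
with indices `i` outside `J`, with the conventions `mu κ J 0 = 1` and
`mu κ J k = 0` for `k < 0`. -/
noncomputable def mu {n : ℕ} (κ : Fin n → ℝ) (J : Finset (Fin n)) (k : ℤ) : ℝ :=
  if k < 0 then 0
  else ∑ T ∈ (Finset.univ \ J).powersetCard k.toNat, ∏ i ∈ T, κ i

open Polynomial

lemma mu_neg {n : ℕ} (κ : Fin n → ℝ) (J : Finset (Fin n)) {k : ℤ} (hk : k < 0) :
    mu κ J k = 0 := by simp [mu, hk]

lemma mu_zero {n : ℕ} (κ : Fin n → ℝ) (J : Finset (Fin n)) : mu κ J 0 = 1 := by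
  simp [mu]

lemma mu_natCast {n : ℕ} (κ : Fin n → ℝ) (J : Finset (Fin n)) (k : ℕ) :
    mu κ J (k : ℤ) = ∑ T ∈ (Finset.univ \ J).powersetCard k, ∏ i ∈ T, κ i := by
  rw [mu, if_neg (by omega : ¬ ((k : ℤ) < 0)), Int.toNat_natCast]

lemma mu_insert {n : ℕ} (κ : Fin n → ℝ) {J J' : Finset (Fin n)} {i : Fin n}
    (hi : i ∉ J) (hJ' : J' = insert i J) (k : ℤ) :
    mu κ J k = mu κ J' k + κ i * mu κ J' (k - 1) := by
  subst hJ'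
  by_cases hk : k < 0
  · rw [mu_neg _ _ hk, mu_neg _ _ hk, mu_neg _ _ (by omega : k - 1 < 0)]; ring
  by_cases hk0 : k = 0
  · subst hk0
    rw [mu_zero, mu_zero, mu_neg _ _ (by omega : (0:ℤ) - 1 < 0)]; ring
  -- now k ≥ 1
  have hk1 : 1 ≤ k := by omega
  have hm : k.toNat = (k - 1).toNat + 1 := by omega
  have hsplit : (Finset.univ \ J) = insert i (Finset.univ \ insert i J) := by
    ext x
    by_cases h : x = i <;> simp [h, hi]
  have hnotin : i ∉ Finset.univ \ insert i J := by simp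
  rw [mu, mu, mu, if_neg hk, if_neg hk, if_neg (by omega : ¬ k - 1 < 0), hsplit, hm,
    Finset.powersetCard_succ_insert hnotin, Finset.sum_union, Finset.sum_image]
  · congr 1
    rw [Finset.mul_sum]
    refine Finset.sum_congr rfl fun T hT => ?_
    have hiT : i ∉ T := fun h => hnotin ((Finset.mem_powersetCard.1 hT).1 h)
    rw [Finset.prod_insert hiT]
  · intro T1 h1 T2 h2 h
    have h1' : i ∉ T1 := fun h => hnotin ((Finset.mem_powersetCard.1 h1).1 h)
    have h2' : i ∉ T2 := fun h => hnotin ((Finset.mem_powersetCard.1 h2).1 h)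
    rw [← Finset.erase_insert h1', ← Finset.erase_insert h2', h]
  · rw [Finset.disjoint_left]
    intro T hT1 hT2
    have : i ∉ T := fun h => hnotin ((Finset.mem_powersetCard.1 hT1).1 h)
    obtain ⟨T', _, rfl⟩ := Finset.mem_image.1 hT2
    exact this (Finset.mem_insert_self _ _)

theorem charpoly_eq
    (V : Type*) [AddCommGroup V] [Module ℝ V] [FiniteDimensional ℝ V]
    (n : ℕ) (hn : 3 ≤ n)
    (κ : Fin n → ℝ)
    (hκ1 : κ ⟨0, Nat.lt_of_lt_of_le (by decide) hn⟩ = κ ⟨1, Nat.lt_of_lt_of_le (by decide) hn⟩)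
    (hκ2 : κ ⟨0, Nat.lt_of_lt_of_le (by decide) hn⟩ = κ ⟨2, Nat.lt_of_lt_of_le (by decide) hn⟩)
    (E : Module.Basis (Fin n) ℝ V)
    (S : V →ₗ[ℝ] V)
    (hS0 : S (E ⟨0, Nat.lt_of_lt_of_le (by decide) hn⟩) = κ ⟨0, Nat.lt_of_lt_of_le (by decide) hn⟩ • E ⟨0, Nat.lt_of_lt_of_le (by decide) hn⟩ - E ⟨2, Nat.lt_of_lt_of_le (by decide) hn⟩)
    (hS1 : S (E ⟨1, Nat.lt_of_lt_of_le (by decide) hn⟩) = κ ⟨0, Nat.lt_of_lt_of_le (by decide) hn⟩ • E ⟨1, Nat.lt_of_lt_of_le (by decide) hn⟩)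
    (hS2 : S (E ⟨2, Nat.lt_of_lt_of_le (by decide) hn⟩) = E ⟨1, Nat.lt_of_lt_of_le (by decide) hn⟩ + κ ⟨0, Nat.lt_of_lt_of_le (by decide) hn⟩ • E ⟨2, Nat.lt_of_lt_of_le (by decide) hn⟩)
    (hSi : ∀ i : Fin n, 3 ≤ (i : ℕ) → S (E i) = κ i • E i) :
    LinearMap.charpoly S = ∏ i : Fin n, (X - C (κ i)) := by
  set i0 : Fin n := ⟨0, Nat.lt_of_lt_of_le (by decide) hn⟩ with hi0
  set i1 : Fin n := ⟨1, Nat.lt_of_lt_of_le (by decide) hn⟩ with hi1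
  set i2 : Fin n := ⟨2, Nat.lt_of_lt_of_le (by decide) hn⟩ with hi2
  have h01 : i0 ≠ i1 := by simp [hi0, hi1, Fin.ext_iff]
  have h02 : i0 ≠ i2 := by simp [hi0, hi2, Fin.ext_iff]
  have h12 : i1 ≠ i2 := by simp [hi1, hi2, Fin.ext_iff]
  have h10 := h01.symm; have h20 := h02.symm; have h21 := h12.symm
  set cf : Fin n → Fin n := fun x => if x = i0 then i1 else if x = i1 then i2
    else if x = i2 then i0 else x with hcf
  set cg : Fin n → Fin n := fun x => if x = i1 then i0 else if x = i2 then i1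
    else if x = i0 then i2 else x with hcg
  have hinv : ∀ x, cg (cf x) = x := by
    intro x
    by_cases h0 : x = i0
    · subst h0; simp [hcf, hcg, h01, h02, h12, h10, h20, h21]
    by_cases h1 : x = i1
    · subst h1; simp [hcf, hcg, h01, h02, h12, h10, h20, h21]
    by_cases h2 : x = i2
    · subst h2; simp [hcf, hcg, h01, h02, h12, h10, h20, h21]
    · simp [hcf, hcg, h0, h1, h2]
  have hinv2 : ∀ x, cf (cg x) = x := by
    intro x
    by_cases h0 : x = i0
    · subst h0; simp [hcf, hcg, h01, h02, h12, h10, h20, h21]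
    by_cases h1 : x = i1
    · subst h1; simp [hcf, hcg, h01, h02, h12, h10, h20, h21]
    by_cases h2 : x = i2
    · subst h2; simp [hcf, hcg, h01, h02, h12, h10, h20, h21]
    · simp [hcf, hcg, h0, h1, h2]
  set c : Equiv.Perm (Fin n) := ⟨cf, cg, hinv, hinv2⟩ with hc
  set F : Module.Basis (Fin n) ℝ V := E.reindex c.symm with hF
  have hFapp : ∀ j, F j = E (c j) := fun j => by
    rw [hF, Module.Basis.reindex_apply]; rfl
  have hc0 : c i0 = i1 := by simp [hc, hcf]
  have hc1 : c i1 = i2 := by simp [hc, hcf, h10]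
  have hc2 : c i2 = i0 := by simp [hc, hcf, h20, h21]
  have hcj : ∀ j : Fin n, 3 ≤ (j : ℕ) → c j = j := by
    intro j hj
    have hj0 : j ≠ i0 := by simp [hi0, Fin.ext_iff]; omega
    have hj1 : j ≠ i1 := by simp [hi1, Fin.ext_iff]; omega
    have hj2 : j ≠ i2 := by simp [hi2, Fin.ext_iff]; omega
    simp [hc, hcf, hj0, hj1, hj2]
  have hSF0 : S (F i0) = κ i0 • F i0 := by
    rw [hFapp i0, hc0, hS1]
  have hSF1 : S (F i1) = F i0 + κ i0 • F i1 := by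
    rw [hFapp i1, hFapp i0, hc0, hc1, hS2]
  have hSF2 : S (F i2) = κ i0 • F i2 - F i1 := by
    rw [hFapp i2, hFapp i1, hc1, hc2, hS0]
  have hSFj : ∀ j : Fin n, 3 ≤ (j : ℕ) → S (F j) = κ j • F j := by
    intro j hj; rw [hFapp j, hcj j hj, hSi j hj]
  set M := LinearMap.toMatrix F F S with hM
  have hMapp : ∀ i j, M i j = F.repr (S (F j)) i := fun i j => by
    rw [hM, LinearMap.toMatrix_apply]
  have hcases : ∀ j : Fin n, j = i0 ∨ j = i1 ∨ j = i2 ∨ 3 ≤ (j : ℕ) := by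
    intro j
    simp only [hi0, hi1, hi2, Fin.ext_iff]
    omega
  have v0 : (i0 : ℕ) = 0 := rfl
  have v1 : (i1 : ℕ) = 1 := rfl
  have v2 : (i2 : ℕ) = 2 := rfl
  have htri : M.BlockTriangular id := by
    intro i j hij
    simp only [id] at hij
    have hij' : (j : ℕ) < (i : ℕ) := hij
    rw [hMapp]
    rcases hcases j with h | h | h | hj
    · rw [h] at hij' ⊢
      have e0 : i0 ≠ i := fun he => by
        have h' : (i0 : ℕ) = (i : ℕ) := congrArg Fin.val he; omega
      rw [hSF0]
      simp [Module.Basis.repr_self, Finsupp.single_apply, e0]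
    · rw [h] at hij' ⊢
      have e0 : i0 ≠ i := fun he => by
        have h' : (i0 : ℕ) = (i : ℕ) := congrArg Fin.val he; omega
      have e1 : i1 ≠ i := fun he => by
        have h' : (i1 : ℕ) = (i : ℕ) := congrArg Fin.val he; omega
      rw [hSF1]
      simp [Module.Basis.repr_self, Finsupp.single_apply, e0, e1]
    · rw [h] at hij' ⊢
      have e1 : i1 ≠ i := fun he => by
        have h' : (i1 : ℕ) = (i : ℕ) := congrArg Fin.val he; omega
      have e2 : i2 ≠ i := fun he => by
        have h' : (i2 : ℕ) = (i : ℕ) := congrArg Fin.val he; omega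
      rw [hSF2]
      simp [Module.Basis.repr_self, Finsupp.single_apply, e1, e2]
    · have e : j ≠ i := fun he => by
        have h' : (j : ℕ) = (i : ℕ) := congrArg Fin.val he; omega
      rw [hSFj j hj]
      simp [Module.Basis.repr_self, Finsupp.single_apply, e]
  have hdiag : ∀ j, M j j = κ (c j) := by
    intro j
    rw [hMapp]
    rcases hcases j with h | h | h | hj
    <;> try rw [h]
    · rw [hSF0, hc0, ← hκ1]; simp [Module.Basis.repr_self, Finsupp.single_apply]
    · rw [hSF1, hc1, ← hκ2]
      simp [Module.Basis.repr_self, Finsupp.single_apply, h01]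
    · rw [hSF2, hc2]
      simp [Module.Basis.repr_self, Finsupp.single_apply, h12]
    · rw [hSFj j hj, hcj j hj]; simp [Module.Basis.repr_self, Finsupp.single_apply]
  calc LinearMap.charpoly S = M.charpoly := (LinearMap.charpoly_toMatrix S F).symm
    _ = ∏ j : Fin n, (X - C (M j j)) := Matrix.charpoly_of_upperTriangular M htri
    _ = ∏ j : Fin n, (X - C (κ (c j))) :=
        Finset.prod_congr rfl fun j _ => by rw [hdiag]
    _ = ∏ i : Fin n, (X - C (κ i)) := Equiv.prod_comp c fun i => X - C (κ i)

/-- Newton transformations of a shape operator of type IV: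
`S E_1 = κ E_1 − E_3`, `S E_2 = κ E_2`, `S E_3 = E_2 + κ E_3`, `S E_i = κ_i E_i`
for `i ≥ 4` (indices `0`, `1`, `2` and `i ≥ 3` in the `Fin n` indexing, with
`κ_1 = κ_2 = κ_3 = κ`). -/
theorem newton_transformation_type_IV
    (V : Type*) [AddCommGroup V] [Module ℝ V] [FiniteDimensional ℝ V]
    (n : ℕ) (hn : 3 ≤ n)
    (κ : Fin n → ℝ)
    (hκ1 : κ ⟨0, by omega⟩ = κ ⟨1, by omega⟩)
    (hκ2 : κ ⟨0, by omega⟩ = κ ⟨2, by omega⟩)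
    (E : Module.Basis (Fin n) ℝ V)
    (S : V →ₗ[ℝ] V)
    (hS0 : S (E ⟨0, by omega⟩) = κ ⟨0, by omega⟩ • E ⟨0, by omega⟩ - E ⟨2, by omega⟩)
    (hS1 : S (E ⟨1, by omega⟩) = κ ⟨0, by omega⟩ • E ⟨1, by omega⟩)
    (hS2 : S (E ⟨2, by omega⟩) = E ⟨1, by omega⟩ + κ ⟨0, by omega⟩ • E ⟨2, by omega⟩)
    (hSi : ∀ i : Fin n, 3 ≤ (i : ℕ) → S (E i) = κ i • E i)
    (a : ℕ → ℝ) (ha : ∀ k, a k = (LinearMap.charpoly S).coeff (n - k))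
    (P : ℕ → V →ₗ[ℝ] V)
    (hP : ∀ k, P k = ∑ j ∈ Finset.range (k + 1), a (k - j) • S ^ j) :
    ∀ k ≤ n,
      P k (E ⟨0, by omega⟩) =
          ((-1 : ℝ) ^ k * mu κ {⟨0, by omega⟩} (k : ℤ)) • E ⟨0, by omega⟩ +
          ((-1 : ℝ) ^ k *
              (-mu κ {⟨0, by omega⟩, ⟨1, by omega⟩, ⟨2, by omega⟩} ((k : ℤ) - 2))) •
            E ⟨1, by omega⟩ +
          ((-1 : ℝ) ^ k * mu κ {⟨0, by omega⟩, ⟨1, by omega⟩} ((k : ℤ) - 1)) •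
            E ⟨2, by omega⟩ ∧
      P k (E ⟨1, by omega⟩) =
          ((-1 : ℝ) ^ k * mu κ {⟨0, by omega⟩} (k : ℤ)) • E ⟨1, by omega⟩ ∧
      P k (E ⟨2, by omega⟩) =
          ((-1 : ℝ) ^ k * (-mu κ {⟨0, by omega⟩, ⟨1, by omega⟩} ((k : ℤ) - 1))) •
            E ⟨1, by omega⟩ +
          ((-1 : ℝ) ^ k * mu κ {⟨0, by omega⟩} (k : ℤ)) • E ⟨2, by omega⟩ ∧
      ∀ i : Fin n, 3 ≤ (i : ℕ) →
        P k (E i) = ((-1 : ℝ) ^ k * mu κ {i} (k : ℤ)) • E i := by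
  have hch := charpoly_eq V n hn κ hκ1 hκ2 E S hS0 hS1 hS2 hSi
  -- coefficients of the characteristic polynomial
  have hcoeff : ∀ k ≤ n, a k = (-1 : ℝ) ^ k * mu κ (∅ : Finset (Fin n)) (k : ℤ) := by
    intro k hk
    have hprod : (∏ i : Fin n, (X - C (κ i))) =
        ((Finset.univ.val.map κ).map (fun t => X - C t)).prod := by
      rw [Multiset.map_map]; rfl
    have hcard : Multiset.card (Finset.univ.val.map κ) = n := by simp
    have hle : n - k ≤ Multiset.card (Finset.univ.val.map κ) := by omega
    have := Multiset.prod_X_sub_C_coeff (Finset.univ.val.map κ) hle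
    rw [ha k, hch, hprod, this, hcard, show n - (n - k) = k by omega,
      Finset.esymm_map_val, mu_natCast, Finset.sdiff_empty]
  -- recurrence for Newton transformations
  have hPs : ∀ (k : ℕ) (v : V), P (k + 1) v = a (k + 1) • v + S (P k v) := by
    intro k v
    have h1 : P (k + 1) = a (k + 1) • (1 : Module.End ℝ V) + S * P k := by
      rw [hP, hP k, Finset.sum_range_succ', Nat.sub_zero, pow_zero,
        Finset.mul_sum, add_comm]
      congr 1
      refine Finset.sum_congr rfl fun j _ => ?_
      have hjj : k + 1 - (j + 1) = k - j := by omega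
      rw [hjj, mul_smul_comm, ← pow_succ']
    rw [h1]
    simp [Module.End.mul_apply]
  set i0 : Fin n := ⟨0, by omega⟩ with hi0
  set i1 : Fin n := ⟨1, by omega⟩ with hi1
  set i2 : Fin n := ⟨2, by omega⟩ with hi2
  have h01 : i0 ≠ i1 := by simp [hi0, hi1, Fin.ext_iff]
  have h02 : i0 ≠ i2 := by simp [hi0, hi2, Fin.ext_iff]
  have h12 : i1 ≠ i2 := by simp [hi1, hi2, Fin.ext_iff]
  have hJ012 : ({i0, i1, i2} : Finset (Fin n)) = insert i2 {i0, i1} := by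
    ext x; simp; tauto
  have hR0 : ∀ j : ℤ, mu κ ∅ j = mu κ {i0} j + κ i0 * mu κ {i0} (j - 1) :=
    fun j => mu_insert κ (by simp) rfl j
  have hR1 : ∀ j : ℤ, mu κ {i0} j = mu κ {i0, i1} j + κ i1 * mu κ {i0, i1} (j - 1) :=
    fun j => mu_insert κ (by simp [h01.symm]) (Finset.pair_comm i0 i1) j
  have hR2 : ∀ j : ℤ, mu κ {i0, i1} j =
      mu κ {i0, i1, i2} j + κ i2 * mu κ {i0, i1, i2} (j - 1) :=
    fun j => mu_insert κ (by simp [h02.symm, h12.symm]) hJ012 j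
  have hRi : ∀ (i : Fin n) (j : ℤ), mu κ ∅ j = mu κ {i} j + κ i * mu κ {i} (j - 1) :=
    fun i j => mu_insert κ (by simp) rfl j
  intro k
  induction k with
  | zero =>
    intro _
    have hP0 : ∀ v : V, P 0 v = v := by
      intro v
      rw [hP 0]
      have h0 : a 0 = 1 := by
        rw [hcoeff 0 (by omega)]
        simp [mu_zero]
      simp [h0]
    refine ⟨?_, ?_, ?_, ?_⟩
    · rw [hP0, Nat.cast_zero, mu_zero, mu_neg κ _ (by norm_num : (0:ℤ) - 2 < 0),
        mu_neg κ _ (by norm_num : (0:ℤ) - 1 < 0)]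
      norm_num
    · rw [hP0, Nat.cast_zero, mu_zero]; norm_num
    · rw [hP0, Nat.cast_zero, mu_zero, mu_neg κ _ (by norm_num : (0:ℤ) - 1 < 0)]
      norm_num
    · intro i _
      rw [hP0, Nat.cast_zero, mu_zero]; norm_num
  | succ k IH =>
    intro hk1
    obtain ⟨IH0, IH1, IH2, IHi⟩ := IH (by omega)
    have hA : a (k + 1) = (-1 : ℝ) ^ (k + 1) * mu κ ∅ ((k : ℤ) + 1) := by
      rw [hcoeff (k + 1) hk1]; push_cast; ring_nf
    have hR0' := hR0 ((k : ℤ) + 1)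
    rw [show ((k : ℤ) + 1 - 1) = (k : ℤ) by ring] at hR0'
    have hR1' := hR1 (k : ℤ)
    have hR2' := hR2 ((k : ℤ) - 1)
    rw [show ((k : ℤ) - 1 - 1) = (k : ℤ) - 2 by ring] at hR2'
    refine ⟨?_, ?_, ?_, ?_⟩
    · rw [hPs k, IH0, map_add, map_add, map_smul, map_smul, map_smul,
        hS0, hS1, hS2]
      push_cast
      rw [show ((k : ℤ) + 1 - 2) = (k : ℤ) - 1 by ring,
        show ((k : ℤ) + 1 - 1) = (k : ℤ) by ring]
      match_scalars
      · linear_combination hA + (-1 : ℝ) ^ (k + 1) * hR0'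
      · linear_combination ((-1 : ℝ) ^ (k + 1)) * hR1' +
          ((-1 : ℝ) ^ k * mu κ {i0, i1} ((k : ℤ) - 1)) * hκ1
      · linear_combination ((-1 : ℝ) ^ k) * hR2' +
          ((-1 : ℝ) ^ (k + 1) * mu κ {i0, i1, i2} ((k : ℤ) - 2)) * hκ2
    · rw [hPs k, IH1, map_smul, hS1]
      push_cast
      match_scalars
      linear_combination hA + (-1 : ℝ) ^ (k + 1) * hR0'
    · rw [hPs k, IH2, map_add, map_smul, map_smul, hS1, hS2]
      push_cast
      rw [show ((k : ℤ) + 1 - 1) = (k : ℤ) by ring]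
      match_scalars
      · linear_combination hA + (-1 : ℝ) ^ (k + 1) * hR0'
      · linear_combination ((-1 : ℝ) ^ k) * hR1' +
          ((-1 : ℝ) ^ (k + 1) * mu κ {i0, i1} ((k : ℤ) - 1)) * hκ1
    · intro i hi
      have hRi' := hRi i ((k : ℤ) + 1)
      rw [show ((k : ℤ) + 1 - 1) = (k : ℤ) by ring] at hRi'
      rw [hPs k, IHi i hi, map_smul, hSi i hi]
      push_cast
      match_scalars
      linear_combination hA + (-1 : ℝ) ^ (k + 1) * hRi'
end

section
/- Let κ_1, …, κ_n be real numbers, let 1 ≤ m ≤ n be such that κ_1, …, κ_m are pairwise distinct, let 0 ≤ k ≤ n, and let C be a real number. If μ_k^{\{i\}} = C for every i ∈ {1, …, m}, then μ_k^J = C for every nonempty subset J ⊆ {1, …, m}. -/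
lemma mu_rec {n : ℕ} (κ : Fin n → ℝ) (J : Finset (Fin n)) (i : Fin n) (hi : i ∉ J) (k : ℕ) :
    mu κ J (k : ℤ) = mu κ (insert i J) (k : ℤ) + κ i * mu κ (insert i J) ((k : ℤ) - 1) := by
  cases k with
  | zero => simp [mu]
  | succ k =>
    have hk1 : ¬ (((k : ℕ) + 1 : ℤ) < 0) := by omega
    have hk2 : ¬ ((((k : ℕ) + 1 : ℤ)) - 1 < 0) := by omega
    have ht1 : (((k : ℕ) + 1 : ℤ)).toNat = k + 1 := by omega
    have ht2 : ((((k : ℕ) + 1 : ℤ)) - 1).toNat = k := by omega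
    have hiu : i ∈ Finset.univ \ J := by simp [hi]
    have hnotmem : i ∉ Finset.univ \ insert i J := by simp
    have key : Finset.univ \ J = insert i (Finset.univ \ insert i J) := by
      rw [Finset.sdiff_insert, Finset.insert_erase hiu]
    simp only [mu, Nat.cast_add, Nat.cast_one] at *
    rw [if_neg hk1, if_neg hk2, ht1, ht2, key,
      Finset.powersetCard_succ_insert hnotmem, Finset.sum_union, Finset.sum_image]
    · congr 1
      rw [Finset.mul_sum]
      apply Finset.sum_congr rfl
      intro T hT
      have hiT : i ∉ T := by
        intro hmem
        exact hnotmem ((Finset.mem_powersetCard.mp hT).1 hmem)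
      rw [Finset.prod_insert hiT]
    · intro T hT T' hT' hEq
      have hiT : i ∉ T := fun hmem => hnotmem ((Finset.mem_powersetCard.mp hT).1 hmem)
      have hiT' : i ∉ T' := fun hmem => hnotmem ((Finset.mem_powersetCard.mp hT').1 hmem)
      rw [← Finset.erase_insert hiT, ← Finset.erase_insert hiT', hEq]
    · rw [Finset.disjoint_left]
      intro T hT hT'
      have hiT : i ∉ T := fun hmem => hnotmem ((Finset.mem_powersetCard.mp hT).1 hmem)
      obtain ⟨S, _, rfl⟩ := Finset.mem_image.mp hT'
      exact hiT (Finset.mem_insert_self i S)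

/-- If `κ_1, …, κ_m` are pairwise distinct and `μ_k^{{i}} = C` for every
`i ∈ {1, …, m}`, then `μ_k^J = C` for every nonempty subset `J ⊆ {1, …, m}`. -/
theorem mu_eq_of_mu_singleton_eq
    (n : ℕ) (κ : Fin n → ℝ) (m : ℕ) (hm1 : 1 ≤ m) (hmn : m ≤ n)
    (hdist : ∀ i j : Fin n, (i : ℕ) < m → (j : ℕ) < m → i ≠ j → κ i ≠ κ j)
    (k : ℕ) (hk : k ≤ n) (C : ℝ)
    (h : ∀ i : Fin n, (i : ℕ) < m → mu κ {i} (k : ℤ) = C) :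
    ∀ J : Finset (Fin n), J.Nonempty → (∀ i ∈ J, (i : ℕ) < m) →
      mu κ J (k : ℤ) = C := by
  intro J
  induction J using Finset.strongInductionOn with
  | _ J ih =>
    intro hJne hJm
    rcases eq_or_lt_of_le (Finset.one_le_card.mpr hJne) with hcard | hcard
    · obtain ⟨i, rfl⟩ := Finset.card_eq_one.mp hcard.symm
      exact h i (hJm i (Finset.mem_singleton_self i))
    · obtain ⟨i, hiJ, j, hjJ, hij⟩ := Finset.one_lt_card.mp hcard
      have hmi : (i : ℕ) < m := hJm i hiJ
      have hmj : (j : ℕ) < m := hJm j hjJ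
      -- J' = J.erase i, J'' = J.erase j
      have hJi : insert i (J.erase i) = J := Finset.insert_erase hiJ
      have hJj : insert j (J.erase j) = J := Finset.insert_erase hjJ
      have hssi : J.erase i ⊂ J := Finset.erase_ssubset hiJ
      have hssj : J.erase j ⊂ J := Finset.erase_ssubset hjJ
      have hnei : (J.erase i).Nonempty := ⟨j, Finset.mem_erase.mpr ⟨hij.symm, hjJ⟩⟩
      have hnej : (J.erase j).Nonempty := ⟨i, Finset.mem_erase.mpr ⟨hij, hiJ⟩⟩
      have hCi : mu κ (J.erase i) (k : ℤ) = C :=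
        ih _ hssi hnei (fun x hx => hJm x (Finset.mem_of_mem_erase hx))
      have hCj : mu κ (J.erase j) (k : ℤ) = C :=
        ih _ hssj hnej (fun x hx => hJm x (Finset.mem_of_mem_erase hx))
      have hri : mu κ (J.erase i) (k : ℤ)
          = mu κ J (k : ℤ) + κ i * mu κ J ((k : ℤ) - 1) := by
        have := mu_rec κ (J.erase i) i (Finset.notMem_erase i J) k
        rwa [hJi] at this
      have hrj : mu κ (J.erase j) (k : ℤ)
          = mu κ J (k : ℤ) + κ j * mu κ J ((k : ℤ) - 1) := by
        have := mu_rec κ (J.erase j) j (Finset.notMem_erase j J) k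
        rwa [hJj] at this
      have hκ : κ i ≠ κ j := hdist i j hmi hmj hij
      have hzero : mu κ J ((k : ℤ) - 1) = 0 := by
        have hsub : (κ i - κ j) * mu κ J ((k : ℤ) - 1) = 0 := by
          have := hCi.trans hCj.symm
          rw [hri, hrj] at this
          ring_nf
          ring_nf at this
          linarith
        rcases mul_eq_zero.mp hsub with h0 | h0
        · exact absurd (by linarith : κ i = κ j) hκ
        · exact h0
      rw [hri, hzero, mul_zero, add_zero] at hCi
      exact hCi
end
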